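/- Let a < b be real numbers and let f : ℝ → ℝ be strictly decreasing and interval-integrable on [0, b−a]. Define the transfer potential K̄(x) = ∫_a^b f(|x−y|) dy for x ∈ [a,b]. Then the midpoint (a+b)/2 is the unique maximizer of K̄ on [a,b] (every x ∈ [a,b] with x ≠ (a+b)/2 satisfies K̄(x) < K̄((a+b)/2)), and the minimum of K̄ on [a,b] is attained exactly at the two endpoints a and b. -/

import Mathlib

open MeasureTheory

/-- **Magnification prototypes, strict version.**
For `a < b` and `f` strictly decreasing and interval-integrable on `[0, b - a]`, the transfer
potential `K̄ x = ∫ y in a..b, f |x - y|` is uniquely maximized at the midpoint `(a + b) / 2`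
(every `x ∈ [a, b]` with `x ≠ (a + b) / 2` satisfies `K̄ x < K̄ ((a + b) / 2)`), and its minimum
on `[a, b]` is attained exactly at the two endpoints: `K̄ a = K̄ b`, `K̄ a ≤ K̄ x` for all
`x ∈ [a, b]`, and `K̄ a < K̄ x` for every interior point `x ∈ (a, b)`. -/
theorem transfer_potential_unique_max_min
    (a b : ℝ) (hab : a < b) (f : ℝ → ℝ) (hf : StrictAnti f)
    (hint : IntervalIntegrable f volume 0 (b - a)) :
    (∀ x ∈ Set.Icc a b, x ≠ (a + b) / 2 →
      (∫ y in a..b, f |x - y|) < ∫ y in a..b, f |(a + b) / 2 - y|) ∧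
    (∫ y in a..b, f |a - y|) = (∫ y in a..b, f |b - y|) ∧
    (∀ x ∈ Set.Icc a b, (∫ y in a..b, f |a - y|) ≤ ∫ y in a..b, f |x - y|) ∧
    (∀ x ∈ Set.Ioo a b, (∫ y in a..b, f |a - y|) < ∫ y in a..b, f |x - y|) := by
  have hba : (0:ℝ) < b - a := by linarith
  -- integrability on subintervals of [0, b-a]
  have hsub : ∀ u v : ℝ, 0 ≤ u → u ≤ v → v ≤ b - a → IntervalIntegrable f volume u v := by
    intro u v hu huv hv
    refine hint.mono_set ?_
    rw [Set.uIcc_of_le huv, Set.uIcc_of_le (by linarith)]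
    exact Set.Icc_subset_Icc hu hv
  set F : ℝ → ℝ := fun t => ∫ s in (0:ℝ)..t, f s with hFdef
  -- representation of the potential
  have hrepr : ∀ x ∈ Set.Icc a b, (∫ y in a..b, f |x - y|) = F (x - a) + F (b - x) := by
    rintro x ⟨hax, hxb⟩
    have iL : IntervalIntegrable (fun y => f (x - y)) volume a x := by
      have := (hsub 0 (x - a) le_rfl (by linarith) (by linarith)).comp_sub_left x
      simpa using this.symm
    have iR : IntervalIntegrable (fun y => f (y - x)) volume x b := by
      have := (hsub 0 (b - x) le_rfl (by linarith) (by linarith)).comp_sub_right x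
      simpa using this
    have eL : Set.EqOn (fun y => f |x - y|) (fun y => f (x - y)) (Set.uIcc a x) := by
      intro y hy
      rw [Set.uIcc_of_le hax] at hy
      simp only
      rw [abs_of_nonneg (by linarith [hy.2])]
    have eR : Set.EqOn (fun y => f |x - y|) (fun y => f (y - x)) (Set.uIcc x b) := by
      intro y hy
      rw [Set.uIcc_of_le hxb] at hy
      simp only
      rw [abs_of_nonpos (by linarith [hy.1]), neg_sub]
    have iL' : IntervalIntegrable (fun y => f |x - y|) volume a x :=
      iL.congr
        (fun y hy => (eL (Set.uIoc_subset_uIcc hy)).symm)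
    have iR' : IntervalIntegrable (fun y => f |x - y|) volume x b :=
      iR.congr
        (fun y hy => (eR (Set.uIoc_subset_uIcc hy)).symm)
    rw [← intervalIntegral.integral_add_adjacent_intervals iL' iR']
    rw [intervalIntegral.integral_congr eL, intervalIntegral.integral_congr eR]
    rw [intervalIntegral.integral_comp_sub_left f x,
      intervalIntegral.integral_comp_sub_right f x]
    simp [hFdef]
  -- key strict comparison
  have key : ∀ d' d : ℝ, 0 ≤ d' → d' < d → d ≤ (b - a) / 2 →
      F ((b - a) / 2 + d) + F ((b - a) / 2 - d)
        < F ((b - a) / 2 + d') + F ((b - a) / 2 - d') := by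
    intro d' d hd0 hdd hdL
    set L : ℝ := (b - a) / 2 with hLdef
    have hd0' : (0:ℝ) < d := lt_of_le_of_lt hd0 hdd
    have hc : (0:ℝ) < d + d' := by linarith
    have i1 : IntervalIntegrable f volume 0 (L - d) :=
      hsub 0 (L - d) le_rfl (by linarith) (by linarith)
    have i2 : IntervalIntegrable f volume 0 (L - d') :=
      hsub 0 (L - d') le_rfl (by linarith) (by linarith)
    have i3 : IntervalIntegrable f volume 0 (L + d') :=
      hsub 0 (L + d') le_rfl (by linarith) (by linarith)
    have i4 : IntervalIntegrable f volume 0 (L + d) :=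
      hsub 0 (L + d) le_rfl (by linarith) (by linarith)
    have e1 : F (L - d') - F (L - d) = ∫ t in (L - d)..(L - d'), f t :=
      intervalIntegral.integral_interval_sub_left i2 i1
    have e2 : F (L + d) - F (L + d') = ∫ t in (L + d')..(L + d), f t :=
      intervalIntegral.integral_interval_sub_left i4 i3
    have eshift : (∫ t in (L + d')..(L + d), f t)
        = ∫ t in (L - d)..(L - d'), f (t + (d + d')) := by
      rw [intervalIntegral.integral_comp_add_right f (d + d')]
      congr 1 <;> ring
    have j1 : IntervalIntegrable f volume (L - d) (L - d') :=
      hsub (L - d) (L - d') (by linarith) (by linarith) (by linarith)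
    have j2 : IntervalIntegrable (fun t => f (t + (d + d'))) volume (L - d) (L - d') := by
      have := (hsub (L + d') (L + d) (by linarith) (by linarith) (by linarith)).comp_add_right
        (d + d')
      have h1 : L + d' - (d + d') = L - d := by ring
      have h2 : L + d - (d + d') = L - d' := by ring
      rwa [h1, h2] at this
    have hpos : 0 < ∫ t in (L - d)..(L - d'), (f t - f (t + (d + d'))) := by
      refine intervalIntegral.intervalIntegral_pos_of_pos_on (j1.sub j2) ?_ (by linarith)
      intro t _
      have : t < t + (d + d') := by linarith
      exact sub_pos.mpr (hf this)
    rw [intervalIntegral.integral_sub j1 j2, ← eshift] at hpos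
    have : F (L + d) - F (L + d') < F (L - d') - F (L - d) := by
      rw [e1, e2]; linarith
    linarith
  -- potential in terms of distance to midpoint
  have habs : ∀ x ∈ Set.Icc a b, (∫ y in a..b, f |x - y|)
      = F ((b - a) / 2 + |x - (a + b) / 2|) + F ((b - a) / 2 - |x - (a + b) / 2|) := by
    intro x hx
    rw [hrepr x hx]
    rcases abs_cases (x - (a + b) / 2) with ⟨h, _⟩ | ⟨h, _⟩
    · rw [h]
      have e1 : (b - a) / 2 + (x - (a + b) / 2) = x - a := by ring
      have e2 : (b - a) / 2 - (x - (a + b) / 2) = b - x := by ring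
      rw [e1, e2]
    · rw [h]
      have e1 : (b - a) / 2 + -(x - (a + b) / 2) = b - x := by ring
      have e2 : (b - a) / 2 - -(x - (a + b) / 2) = x - a := by ring
      rw [e1, e2, add_comm]
  have hmem : (a + b) / 2 ∈ Set.Icc a b := by constructor <;> [linarith; linarith]
  have hdist : ∀ x ∈ Set.Icc a b, |x - (a + b) / 2| ≤ (b - a) / 2 := by
    rintro x ⟨h1, h2⟩
    rw [abs_le]; constructor <;> linarith
  -- main comparison
  have main : ∀ x ∈ Set.Icc a b, ∀ x' ∈ Set.Icc a b,
      |x' - (a + b) / 2| < |x - (a + b) / 2| →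
      (∫ y in a..b, f |x - y|) < ∫ y in a..b, f |x' - y| := by
    intro x hx x' hx' hlt
    rw [habs x hx, habs x' hx']
    exact key _ _ (abs_nonneg _) hlt (hdist x hx)
  have haeqb : (∫ y in a..b, f |a - y|) = (∫ y in a..b, f |b - y|) := by
    rw [hrepr a ⟨le_rfl, le_of_lt hab⟩, hrepr b ⟨le_of_lt hab, le_rfl⟩]
    simp [add_comm]
  refine ⟨?_, haeqb, ?_, ?_⟩
  · intro x hx hne
    refine main x hx ((a + b) / 2) hmem ?_
    simp only [sub_self, abs_zero]
    rw [abs_pos, sub_ne_zero]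
    exact hne
  · intro x hx
    rcases lt_or_eq_of_le (hdist x hx) with h | h
    · refine le_of_lt (main a ⟨le_rfl, le_of_lt hab⟩ x hx ?_)
      rwa [show |a - (a + b) / 2| = (b - a) / 2 by rw [abs_of_nonpos (by linarith)]; ring]
    · -- |x - m| = (b-a)/2 → x = a or x = b
      rcases abs_eq (by linarith : (0:ℝ) ≤ (b - a) / 2) |>.mp h with h' | h'
      · have : x = b := by linarith
        rw [this, ← haeqb]
      · have : x = a := by linarith
        rw [this]
  · intro x hx
    refine main a ⟨le_rfl, le_of_lt hab⟩ x (Set.Ioo_subset_Icc_self hx) ?_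
    rw [show |a - (a + b) / 2| = (b - a) / 2 by rw [abs_of_nonpos (by linarith)]; ring, abs_lt]
    obtain ⟨h1, h2⟩ := hx
    constructor <;> linarith
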